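/- Let S be symmetric positive definite. For any sequence (Q_k) of symmetric positive definite matrices whose smallest eigenvalues tend to 0, the values f_S(Q_k) = tr(S Q_k) − log(det Q_k) tend to +∞. -/

import Mathlib

open Matrix Filter

/-- The Gaussian graphical loss `f_S(Q) = tr(S Q) − log (det Q)`. -/
noncomputable def gaussLoss {d : ℕ} (S Q : Matrix (Fin d) (Fin d) ℝ) : ℝ :=
  (S * Q).trace - Real.log Q.det


lemma myDiagNonneg {n : Type*} [Fintype n] [DecidableEq n] {P : Matrix n n ℝ}
    (hP : P.PosSemidef) (i : n) : 0 ≤ P i i := by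
  exact hP.diag_nonneg

lemma myTraceEig {n : Type*} [Fintype n] [DecidableEq n] {A : Matrix n n ℝ}
    (hA : A.IsHermitian) : A.trace = ∑ i, hA.eigenvalues i := by
  conv_lhs => rw [hA.spectral_theorem, Unitary.conjStarAlgAut_apply]
  rw [Matrix.trace_mul_cycle]
  rw [show (star (hA.eigenvectorUnitary : Matrix n n ℝ)) * (hA.eigenvectorUnitary : Matrix n n ℝ) = 1 from mem_unitaryGroup_iff'.mp (hA.eigenvectorUnitary).2]
  simp [Matrix.trace_diagonal]

/-- tr(S Q) ≥ c · tr Q where c is the smallest eigenvalue of S. -/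
lemma myTraceIneq {n : Type*} [Fintype n] [DecidableEq n] {S : Matrix n n ℝ}
    (hS : S.PosDef) {Q : Matrix n n ℝ} (hQ : Q.PosSemidef) (c : ℝ)
    (hc : ∀ i, c ≤ hS.1.eigenvalues i) :
    c * Q.trace ≤ (S * Q).trace := by
  set U : Matrix n n ℝ := (hS.1.eigenvectorUnitary : Matrix n n ℝ) with hU
  set M : Matrix n n ℝ := star U * Q * U with hM
  have hMpsd : M.PosSemidef := by
    exact hQ.conjTranspose_mul_mul_same U
  have hUU : U * star U = 1 := mem_unitaryGroup_iff.mp (hS.1.eigenvectorUnitary).2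
  have htrM : M.trace = Q.trace := by
    rw [hM, Matrix.trace_mul_cycle, hUU, Matrix.one_mul]
  have hSQ : (S * Q).trace = (diagonal (RCLike.ofReal ∘ hS.1.eigenvalues) * M).trace := by
    conv_lhs => rw [hS.1.spectral_theorem, Unitary.conjStarAlgAut_apply]
    rw [hM, Matrix.mul_assoc (U * diagonal (RCLike.ofReal ∘ hS.1.eigenvalues)),
      Matrix.trace_mul_comm, ← Matrix.mul_assoc, Matrix.trace_mul_comm]
  have hdiag : (diagonal (RCLike.ofReal ∘ hS.1.eigenvalues) * M).trace
      = ∑ i, hS.1.eigenvalues i * M i i := by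
    simp [Matrix.trace, Matrix.diag, Matrix.diagonal_mul]
  rw [hSQ, hdiag, ← htrM]
  have : M.trace = ∑ i, M i i := rfl
  rw [this, Finset.mul_sum]
  exact Finset.sum_le_sum fun i _ =>
    mul_le_mul_of_nonneg_right (hc i) (myDiagNonneg hMpsd i)


/-- If `S` is symmetric positive definite and `(Q k)` is a sequence of symmetric
positive definite matrices with `λ_min (Q k) → 0`, then `f_S (Q k) → +∞`. -/
theorem stmt_4 {d : ℕ} (hd : 0 < d) (S : Matrix (Fin d) (Fin d) ℝ) (hS : S.PosDef)
    (Q : ℕ → Matrix (Fin d) (Fin d) ℝ) (hQ : ∀ k, (Q k).PosDef)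
    (hmin : Tendsto (fun k => ⨅ i, (hQ k).1.eigenvalues i) atTop (nhds 0)) :
    Tendsto (fun k => gaussLoss S (Q k)) atTop atTop := by
  simp only [gaussLoss]

  have : Nonempty (Fin d) := Fin.pos_iff_nonempty.mp hd
  -- smallest eigenvalue of S
  set c : ℝ := ⨅ i, hS.1.eigenvalues i with hc
  have hcle : ∀ i, c ≤ hS.1.eigenvalues i := fun i =>
    ciInf_le (Set.Finite.bddBelow (Set.finite_range _)) i
  have hcpos : 0 < c := by
    obtain ⟨i0, hi0⟩ := Finite.exists_min hS.1.eigenvalues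
    exact lt_of_lt_of_le (hS.eigenvalues_pos i0) (le_ciInf hi0)
  set m : ℕ → ℝ := fun k => ⨅ i, (hQ k).1.eigenvalues i with hm
  have hmpos : ∀ k, 0 < m k := by
    intro k
    obtain ⟨i0, hi0⟩ := Finite.exists_min (hQ k).1.eigenvalues
    exact lt_of_lt_of_le ((hQ k).eigenvalues_pos i0) (le_ciInf hi0)
  set C : ℝ := (d - 1 : ℕ) * (1 + Real.log c) with hC
  -- pointwise lower bound
  have key : ∀ k, C - Real.log (m k) ≤ (S * Q k).trace - Real.log (Q k).det := by
    intro k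
    set μ := (hQ k).1.eigenvalues with hμ
    have hμpos : ∀ i, 0 < μ i := (hQ k).eigenvalues_pos
    obtain ⟨i0, hi0⟩ := Finite.exists_min μ
    have hmk : m k = μ i0 :=
      le_antisymm (ciInf_le (Set.Finite.bddBelow (Set.finite_range _)) i0) (le_ciInf hi0)
    have hlogdet : Real.log (Q k).det = ∑ i, Real.log (μ i) := by
      have hdet : (Q k).det = ∏ i, μ i := by
        simpa using (hQ k).1.det_eq_prod_eigenvalues
      rw [hdet, Real.log_prod fun i _ => (hμpos i).ne']
    have htr : c * (∑ i, μ i) ≤ (S * Q k).trace := by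
      have := myTraceIneq hS (hQ k).posSemidef c hcle
      rwa [myTraceEig (hQ k).1] at this
    have hsum : C - Real.log (m k)
        ≤ ∑ i, (c * μ i - Real.log (μ i)) := by
      have hpt : ∀ i ∈ Finset.univ,
          (if i = i0 then -Real.log (m k) else 1 + Real.log c)
            ≤ c * μ i - Real.log (μ i) := by
        intro i _
        by_cases h : i = i0
        · rw [if_pos h, hmk, h]
          have : 0 < c * μ i0 := mul_pos hcpos (hμpos i0)
          linarith
        · simp only [if_neg h]
          have := Real.log_le_sub_one_of_pos (mul_pos hcpos (hμpos i))
          rw [Real.log_mul hcpos.ne' (hμpos i).ne'] at this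
          linarith
      calc C - Real.log (m k)
          = ∑ i, (if i = i0 then -Real.log (m k) else 1 + Real.log c) := by
            rw [← Finset.add_sum_erase _ _ (Finset.mem_univ i0)]
            simp only [if_pos rfl]
            rw [Finset.sum_ite_of_false (by intro i hi; exact Finset.ne_of_mem_erase hi)]
            rw [Finset.sum_const, Finset.card_erase_of_mem (Finset.mem_univ i0),
              Finset.card_univ, Fintype.card_fin]
            push_cast [hC]
            ring
        _ ≤ ∑ i, (c * μ i - Real.log (μ i)) := Finset.sum_le_sum hpt
    rw [hlogdet]
    rw [Finset.sum_sub_distrib, ← Finset.mul_sum] at hsum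
    linarith
  -- limit
  have hlog : Tendsto (fun k => Real.log (m k)) atTop atBot := by
    apply Real.tendsto_log_nhdsGT_zero.comp
    rw [tendsto_nhdsWithin_iff]
    exact ⟨hmin, Filter.Eventually.of_forall fun k => hmpos k⟩
  have : Tendsto (fun k => C - Real.log (m k)) atTop atTop := by
    simpa [sub_eq_add_neg] using tendsto_atTop_add_const_left atTop C (tendsto_neg_atBot_atTop.comp hlog)
  exact tendsto_atTop_mono key this
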